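/- Let G be a countable discrete group, residually finite with respect to a sequence of finite-index normal subgroups G = N₀ ⊇ N₁ ⊇ N₂ ⊇ ⋯ with ⋂_{i≥1} N_i = {1}, equipped with a proper length function and the induced left-invariant metric, each G/N_i carrying the quotient metric. Then the box space □_{N_i}G has sFDC if and only if G has equi-variant sFDC with respect to {N_i}. -/

import Mathlib

open Set Filter
open scoped symmDiff

namespace FDCPaper

/-! ### Proper functions `[0,∞) → ℝ` : preimages of bounded sets are bounded. -/

def ProperFn (ρ : ℝ → ℝ) : Prop :=
  ∀ C : ℝ, ∃ M : ℝ, ∀ t : ℝ, 0 ≤ t → |ρ t| ≤ C → t ≤ M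

/-! ### Length functions on groups and the induced metrics -/

structure IsLengthFunction {G : Type*} [Group G] (l : G → ℝ) : Prop where
  nonneg : ∀ g, 0 ≤ l g
  len_one : l 1 = 0
  len_inv : ∀ g, l g⁻¹ = l g
  subadd : ∀ g h, l (g * h) ≤ l g + l h
  eq_one : ∀ g, l g = 0 → g = 1
  proper : ∀ R : ℝ, {g : G | l g ≤ R}.Finite

/-- The left invariant distance induced by a length function. -/
def dl {G : Type*} [Group G] (l : G → ℝ) (g h : G) : ℝ := l (g⁻¹ * h)

/-- The quotient distance on `G ⧸ N`:
`d([g],[h]) = inf { d_G(g n₁, h n₂) : n₁, n₂ ∈ N }`. -/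
noncomputable def qdist {G : Type*} [Group G] (l : G → ℝ) (N : Subgroup G)
    (x y : G ⧸ N) : ℝ :=
  sInf {r : ℝ | ∃ g h : G, (QuotientGroup.mk g : G ⧸ N) = x ∧
    (QuotientGroup.mk h : G ⧸ N) = y ∧ r = dl l g h}

/-- The quotient length on `G ⧸ N` : `l̄([g]) = inf { l(h) : [h] = [g] }`. -/
noncomputable def qlen {G : Type*} [Group G] (l : G → ℝ) (N : Subgroup G) (x : G ⧸ N) : ℝ :=
  sInf {r : ℝ | ∃ g : G, (QuotientGroup.mk g : G ⧸ N) = x ∧ r = l g}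

/-! ### Families of subsets of a single ambient space, decompositions -/

section Single

variable {α : Type*}

/-- The open ball, for a distance function. -/
def ballS (d : α → α → ℝ) (c : α) (R : ℝ) : Set α := {x | d c x < R}

/-- An `r`-disjoint family of subsets. -/
def rDisjS (d : α → α → ℝ) (r : ℝ) (P : Set (Set α)) : Prop :=
  ∀ A ∈ P, ∀ B ∈ P, A ≠ B → ∀ x ∈ A, ∀ y ∈ B, r ≤ d x y

/-- A uniformly bounded family of subsets. -/
def BddS (d : α → α → ℝ) (𝒴 : Set (Set α)) : Prop :=
  ∃ C : ℝ, ∀ Y ∈ 𝒴, ∀ x ∈ Y, ∀ y ∈ Y, d x y ≤ C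

/-- `X = X₀ ∪ X₁` where each `Xᵢ` is an `r`-disjoint union of members of `𝒴`. -/
def PieceDecomp (d : α → α → ℝ) (r : ℝ) (X : Set α) (𝒴 : Set (Set α)) : Prop :=
  ∃ P₀ P₁ : Set (Set α),
    X = ⋃₀ P₀ ∪ ⋃₀ P₁ ∧ rDisjS d r P₀ ∧ rDisjS d r P₁ ∧ ∀ A ∈ P₀ ∪ P₁, A ∈ 𝒴

/-- `X = X₀ ∪ X₁`, `Xᵢ = ∪ⱼ Xᵢⱼ` with `Xᵢⱼ ∈ 𝒴`, and the cover `{Xᵢⱼ}` of `X` has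
Lebesgue number `≥ R`. -/
def PieceFullDecomp (d : α → α → ℝ) (R : ℝ) (X : Set α) (𝒴 : Set (Set α)) : Prop :=
  ∃ P₀ P₁ : Set (Set α),
    X = ⋃₀ P₀ ∪ ⋃₀ P₁ ∧
    (∀ x ∈ X, ∃ A ∈ P₀ ∪ P₁, {y ∈ X | d x y < R} ⊆ A) ∧
    ∀ A ∈ P₀ ∪ P₁, A ∈ 𝒴

/-- `𝒳` is `r`-decomposable over `𝒴` (families of subsets of a single space). -/
def DecompS (d : α → α → ℝ) (r : ℝ) (𝒳 𝒴 : Set (Set α)) : Prop :=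
  ∀ X ∈ 𝒳, PieceDecomp d r X 𝒴

/-- `𝒳` is `R`-full decomposable over `𝒴`. -/
def FullDecompS (d : α → α → ℝ) (R : ℝ) (𝒳 𝒴 : Set (Set α)) : Prop :=
  ∀ X ∈ 𝒳, PieceFullDecomp d R X 𝒴

/-- Straight finite decomposition complexity of a family of subsets of a space. -/
def sFDCS (d : α → α → ℝ) (𝒳 : Set (Set α)) : Prop :=
  ∀ R : ℕ → ℝ, (∀ n, 0 < R n) → StrictMono R →
    ∃ (m : ℕ) (𝒴 : ℕ → Set (Set α)), 𝒴 0 = 𝒳 ∧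
      (∀ i < m, DecompS d (R i) (𝒴 i) (𝒴 (i + 1))) ∧ BddS d (𝒴 m)

/-- Straight FDC of a metric space, i.e. of the singleton family `{X}`. -/
def SpaceSFDC (d : α → α → ℝ) : Prop := sFDCS d {Set.univ}

end Single

/-! ### General metric families and finite decomposition complexity -/

/-- A metric family, realized as a set of subsets of an indexed collection of spaces
`Z i`, each equipped with its distance function. -/
abbrev Fam {ι : Type*} (Z : ι → Type*) := Set ((i : ι) × Set (Z i))

section Families

variable {ι : Type*} {Z : ι → Type*}

/-- A (uniformly) bounded metric family. -/
def Bdd (d : ∀ i, Z i → Z i → ℝ) (𝒴 : Fam Z) : Prop :=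
  ∃ C : ℝ, ∀ p ∈ 𝒴, ∀ x ∈ p.2, ∀ y ∈ p.2, d p.1 x y ≤ C

/-- The metric family `𝒳` is `r`-decomposable over the metric family `𝒴`. -/
def Decomp (d : ∀ i, Z i → Z i → ℝ) (r : ℝ) (𝒳 𝒴 : Fam Z) : Prop :=
  ∀ p ∈ 𝒳, PieceDecomp (d p.1) r p.2
    {A : Set (Z p.1) | (⟨p.1, A⟩ : (i : ι) × Set (Z i)) ∈ 𝒴}

/-- The collections `D_α` : `D_0` consists of the bounded families, and for `α > 0`,
`𝒳 ∈ D_α` iff for every `r > 0` there are `β < α` and `𝒴 ∈ D_β` with `𝒳 →_r 𝒴`. -/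
def DColl (d : ∀ i, Z i → Z i → ℝ) (α : Ordinal.{0}) : Set (Fam Z) :=
  {𝒳 | (α = 0 ∧ Bdd d 𝒳) ∨
    (α ≠ 0 ∧ ∀ r : ℝ, 0 < r →
      ∃ β : Ordinal.{0}, ∃ _ : β < α, ∃ 𝒴 ∈ DColl d β, Decomp d r 𝒳 𝒴)}
  termination_by α

/-- A metric family has finite decomposition complexity if it belongs to some `D_α`. -/
def HasFDC (d : ∀ i, Z i → Z i → ℝ) (𝒳 : Fam Z) : Prop :=
  ∃ α : Ordinal.{0}, 𝒳 ∈ DColl d α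

end Families

/-- FDC of a single metric space, i.e. of the singleton family `{X}`. -/
def SpaceFDC {X : Type*} (d : X → X → ℝ) : Prop :=
  HasFDC (ι := Unit) (Z := fun _ => X) (fun _ => d) {p | p.2 = Set.univ}

/-! ### Coarse disjoint unions and box spaces -/

/-- The diameter of a space with a distance function. -/
noncomputable def diamD {X : Type*} (d : X → X → ℝ) : ℝ :=
  sSup {r : ℝ | ∃ x y : X, r = d x y}

/-- The coarse disjoint union distance: each piece keeps its own distance, and
`d(x,y) = diam Xᵢ + diam Xⱼ + i + j` for `x ∈ Xᵢ`, `y ∈ Xⱼ` with `i ≠ j`. -/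
noncomputable def cuDist {X : ℕ → Type*} (d : ∀ i, X i → X i → ℝ) :
    (Σ i, X i) → (Σ i, X i) → ℝ := fun x y =>
  if h : x.1 = y.1 then d y.1 (h ▸ x.2) y.2
  else diamD (d x.1) + diamD (d y.1) + (x.1 : ℝ) + (y.1 : ℝ)

/-- The box space `□_{Nᵢ} G` : the coarse disjoint union of the quotients `G ⧸ Nᵢ`. -/
noncomputable def boxDist {G : Type*} [Group G] (l : G → ℝ) (N : ℕ → Subgroup G) :
    (Σ i, G ⧸ N i) → (Σ i, G ⧸ N i) → ℝ :=
  cuDist (fun i => qdist l (N i))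

/-! ### Equivariance -/

section EquivGroup

variable {G : Type*} [Group G]

/-- A family of subsets of `G` is `H`-invariant if it is closed under right
translation by elements of `H`. -/
def RInvFam (H : Subgroup G) (P : Set (Set G)) : Prop :=
  ∀ U ∈ P, ∀ h ∈ H, (fun g => g * h) '' U ∈ P

/-- An `H`-invariant decomposition of a single subset of `G`. -/
def PieceDecompInv (d : G → G → ℝ) (H : Subgroup G) (r : ℝ) (X : Set G)
    (𝒴 : Set (Set G)) : Prop :=
  ∃ P₀ P₁ : Set (Set G),
    X = ⋃₀ P₀ ∪ ⋃₀ P₁ ∧ rDisjS d r P₀ ∧ rDisjS d r P₁ ∧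
    (∀ A ∈ P₀ ∪ P₁, A ∈ 𝒴) ∧ RInvFam H P₀ ∧ RInvFam H P₁

/-- An `H`-invariant decomposition `𝒳 →_r 𝒴` of families of subsets of `G`. -/
def DecompSInv (d : G → G → ℝ) (H : Subgroup G) (r : ℝ) (𝒳 𝒴 : Set (Set G)) : Prop :=
  ∀ X ∈ 𝒳, PieceDecompInv d H r X 𝒴

/-- An `H`-invariant full decomposition of a single subset of `G`. -/
def PieceFullDecompInv (d : G → G → ℝ) (H : Subgroup G) (R : ℝ) (X : Set G)
    (𝒴 : Set (Set G)) : Prop :=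
  ∃ P₀ P₁ : Set (Set G),
    X = ⋃₀ P₀ ∪ ⋃₀ P₁ ∧
    (∀ x ∈ X, ∃ A ∈ P₀ ∪ P₁, {y ∈ X | d x y < R} ⊆ A) ∧
    (∀ A ∈ P₀ ∪ P₁, A ∈ 𝒴) ∧ RInvFam H P₀ ∧ RInvFam H P₁

/-- An `H`-invariant full decomposition `𝒳 ↝_R 𝒴` of families of subsets of `G`. -/
def FullDecompSInv (d : G → G → ℝ) (H : Subgroup G) (R : ℝ) (𝒳 𝒴 : Set (Set G)) : Prop :=
  ∀ X ∈ 𝒳, PieceFullDecompInv d H R X 𝒴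

/-- `G` has equi-variant straight FDC with respect to the sequence `{Nᵢ}` : for any
increasing sequence `R₁ < R₂ < ⋯` of positive reals there are `m`, `K` and a chain
of decompositions `{G} →_{R₁} 𝒴₁ →_{R₂} ⋯ →_{R_m} 𝒴_m` with `𝒴_m` bounded and the
last decomposition `N_K`-invariant. -/
def EquivSFDC (d : G → G → ℝ) (N : ℕ → Subgroup G) : Prop :=
  ∀ R : ℕ → ℝ, (∀ n, 0 < R n) → StrictMono R →
    ∃ m K : ℕ, 0 < m ∧ ∃ 𝒴 : ℕ → Set (Set G), 𝒴 0 = {Set.univ} ∧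
      (∀ i < m, DecompS d (R i) (𝒴 i) (𝒴 (i + 1))) ∧ BddS d (𝒴 m) ∧
      DecompSInv d (N K) (R (m - 1)) (𝒴 (m - 1)) (𝒴 m)

end EquivGroup

/-! ### Stable FDC -/

/-- The distances on the members of the family `{H/K : K ⊴ H ≤ G}` : `H` carries the
metric induced from `G` and `H/K` the corresponding quotient metric. -/
noncomputable def stableD {G : Type*} [Group G] (l : G → ℝ) :
    ∀ p : Σ H : Subgroup G, Subgroup ↥H, (↥p.1 ⧸ p.2) → (↥p.1 ⧸ p.2) → ℝ :=
  fun p => qdist (fun h : ↥p.1 => l ↑h) p.2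

/-- `G` has stable FDC if the family `{H/K : K ⊴ H ≤ G}` has FDC. -/
def StableFDC (G : Type*) [Group G] (l : G → ℝ) : Prop :=
  HasFDC (stableD l)
    {q : (p : Σ H : Subgroup G, Subgroup ↥H) × Set (↥p.1 ⧸ p.2) |
      q.1.2.Normal ∧ q.2 = Set.univ}

/-! ### Coarse equivalence of metric families -/

/-- A coarse equivalence between two indexed metric families: a family of maps
`f i : Z i → W (σ i)` which is uniformly expansive and effectively proper, admitting
a coarse embedding `g i : W (σ i) → Z i` in the opposite direction with
`d(x, g(f x)) ≤ C` and `d(y, f(g y)) ≤ C`. -/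
def FamCoarseEquiv {ι κ : Type*} {Z : ι → Type*} {W : κ → Type*}
    (d : ∀ i, Z i → Z i → ℝ) (e : ∀ j, W j → W j → ℝ) : Prop :=
  ∃ (σ : ι → κ) (f : ∀ i, Z i → W (σ i)) (g : ∀ i, W (σ i) → Z i)
    (ρ₁ ρ₂ ρ₃ ρ₄ : ℝ → ℝ) (C : ℝ),
    Monotone ρ₁ ∧ ProperFn ρ₁ ∧ Monotone ρ₂ ∧ ProperFn ρ₂ ∧
    Monotone ρ₃ ∧ ProperFn ρ₃ ∧ Monotone ρ₄ ∧ ProperFn ρ₄ ∧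
    (∀ i x x', e (σ i) (f i x) (f i x') ≤ ρ₁ (d i x x')) ∧
    (∀ i x x', ρ₂ (d i x x') ≤ e (σ i) (f i x) (f i x')) ∧
    (∀ i y y', d i (g i y) (g i y') ≤ ρ₃ (e (σ i) y y')) ∧
    (∀ i y y', ρ₄ (e (σ i) y y') ≤ d i (g i y) (g i y')) ∧
    (∀ i x, d i x (g i (f i x)) ≤ C) ∧ (∀ i y, e (σ i) y (f i (g i y)) ≤ C)

/-! ### Amenability (Følner) and elementary amenability -/

/-- Følner characterization of amenability for a countable discrete group. -/
def Amenable (G : Type*) [Group G] : Prop :=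
  ∀ (F : Finset G) (ε : ℝ), 0 < ε →
    ∃ S : Finset G, S.Nonempty ∧ ∀ g ∈ F,
      letI := Classical.decEq G
      (((S.image (fun s => g * s)) ∆ S).card : ℝ) ≤ ε * (S.card : ℝ)

/-- The class of elementary amenable groups: the smallest class of groups containing
the finite groups and the abelian groups and closed under extensions and directed
unions. -/
inductive IsElementaryAmenable : ∀ (G : Type u) [Group G], Prop where
  | of_finite (G : Type u) [Group G] (h : Finite G) : IsElementaryAmenable G
  | of_comm (G : Type u) [Group G] (h : ∀ a b : G, a * b = b * a) :
      IsElementaryAmenable G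
  | of_extension (N G Q : Type u) [Group N] [Group G] [Group Q]
      (φ : N →* G) (ψ : G →* Q) (hφ : Function.Injective φ)
      (hψ : Function.Surjective ψ) (hex : φ.range = ψ.ker)
      (hN : IsElementaryAmenable N) (hQ : IsElementaryAmenable Q) :
      IsElementaryAmenable G
  | of_directedUnion (G : Type u) [Group G] (ι : Type u) (K : ι → Subgroup G)
      (hdir : ∀ i j, ∃ k, K i ≤ K k ∧ K j ≤ K k)
      (hcover : ∀ g : G, ∃ i, g ∈ K i)
      (hK : ∀ i, IsElementaryAmenable ↥(K i)) : IsElementaryAmenable G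

/-! ### Auxiliary lemmas for the proof of Statement 4 -/

section Aux

variable {G : Type*} [Group G]

private lemma dl_self_aux (l : G → ℝ) (hl : IsLengthFunction l) (g : G) : dl l g g = 0 := by
  simp [dl, hl.len_one]

private lemma qset_nonempty (l : G → ℝ) (N : Subgroup G) (x y : G ⧸ N) :
    {r : ℝ | ∃ g h : G, (QuotientGroup.mk g : G ⧸ N) = x ∧
      (QuotientGroup.mk h : G ⧸ N) = y ∧ r = dl l g h}.Nonempty := by
  obtain ⟨g, rfl⟩ := QuotientGroup.mk_surjective x
  obtain ⟨h, rfl⟩ := QuotientGroup.mk_surjective y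
  exact ⟨dl l g h, g, h, rfl, rfl, rfl⟩

private lemma qset_bddBelow (l : G → ℝ) (hl : IsLengthFunction l) (N : Subgroup G)
    (x y : G ⧸ N) :
    BddBelow {r : ℝ | ∃ g h : G, (QuotientGroup.mk g : G ⧸ N) = x ∧
      (QuotientGroup.mk h : G ⧸ N) = y ∧ r = dl l g h} := by
  refine ⟨0, ?_⟩
  rintro r ⟨g, h, -, -, rfl⟩
  exact hl.nonneg _

private lemma qdist_le_dl (l : G → ℝ) (hl : IsLengthFunction l) (N : Subgroup G) (g h : G) :
    qdist l N (QuotientGroup.mk g) (QuotientGroup.mk h) ≤ dl l g h :=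
  csInf_le (qset_bddBelow l hl N _ _) ⟨g, h, rfl, rfl, rfl⟩

private lemma le_qdist (l : G → ℝ) {N : Subgroup G} {x y : G ⧸ N} {r : ℝ}
    (h : ∀ g h' : G, (QuotientGroup.mk g : G ⧸ N) = x →
      (QuotientGroup.mk h' : G ⧸ N) = y → r ≤ dl l g h') :
    r ≤ qdist l N x y := by
  refine le_csInf (qset_nonempty l N x y) ?_
  rintro s ⟨g, h', hg, hh, rfl⟩
  exact h g h' hg hh

private lemma qdist_nonneg (l : G → ℝ) (hl : IsLengthFunction l) (N : Subgroup G)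
    (x y : G ⧸ N) : 0 ≤ qdist l N x y :=
  le_qdist l fun g h' _ _ => hl.nonneg _

private lemma qdist_self (l : G → ℝ) (hl : IsLengthFunction l) (N : Subgroup G) (x : G ⧸ N) :
    qdist l N x x = 0 := by
  obtain ⟨g, rfl⟩ := QuotientGroup.mk_surjective x
  refine le_antisymm ?_ (qdist_nonneg l hl N _ _)
  simpa [dl_self_aux l hl g] using qdist_le_dl l hl N g g

private lemma boxDist_mk {l : G → ℝ} {N : ℕ → Subgroup G} (i : ℕ) (x y : G ⧸ N i) :
    boxDist l N ⟨i, x⟩ ⟨i, y⟩ = qdist l (N i) x y := by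
  simp [boxDist, cuDist]

private lemma boxDist_of_ne {l : G → ℝ} {N : ℕ → Subgroup G} {i j : ℕ} (h : i ≠ j)
    (x : G ⧸ N i) (y : G ⧸ N j) :
    boxDist l N ⟨i, x⟩ ⟨j, y⟩ =
      diamD (qdist l (N i)) + diamD (qdist l (N j)) + (i : ℝ) + (j : ℝ) := by
  rw [boxDist, cuDist, dif_neg h]

private lemma le_diamD {Q : Type*} [Finite Q] (d : Q → Q → ℝ) (x y : Q) :
    d x y ≤ diamD d := by
  refine le_csSup ?_ ⟨x, y, rfl⟩
  have he : {r : ℝ | ∃ x y : Q, r = d x y} = Set.range (fun p : Q × Q => d p.1 p.2) := by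
    ext r
    constructor
    · rintro ⟨x, y, rfl⟩; exact ⟨(x, y), rfl⟩
    · rintro ⟨⟨x, y⟩, rfl⟩; exact ⟨x, y, rfl⟩
  rw [he]
  exact (Set.finite_range _).bddAbove

private lemma diamD_nonneg {Q : Type*} [Finite Q] (d : Q → Q → ℝ) (x : Q)
    (hd : d x x = 0) : 0 ≤ diamD d :=
  hd ▸ le_diamD d x x

private lemma N_antitone (N : ℕ → Subgroup G) (hmono : ∀ i, N (i + 1) ≤ N i)
    {j k : ℕ} (h : j ≤ k) : N k ≤ N j := by
  induction h with
  | refl => exact le_rfl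
  | step _ ih => exact le_trans (hmono _) ih

private lemma exists_deep (l : G → ℝ) (hl : IsLengthFunction l) (N : ℕ → Subgroup G)
    (hmono : ∀ i, N (i + 1) ≤ N i) (htriv : ∀ g : G, (∀ i, g ∈ N i) → g = 1) (S : ℝ) :
    ∃ K : ℕ, ∀ n ∈ N K, n ≠ 1 → S < l n := by
  classical
  have hfin := hl.proper S
  have key : ∀ g : G, g ≠ 1 → ∃ i, g ∉ N i := by
    intro g hg
    by_contra h
    push_neg at h
    exact hg (htriv g h)
  let idx : G → ℕ := fun g => if h : g ≠ 1 then (key g h).choose else 0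
  refine ⟨hfin.toFinset.sup idx, ?_⟩
  intro n hn hn1
  by_contra hle
  push_neg at hle
  have hnF : n ∈ hfin.toFinset := hfin.mem_toFinset.mpr hle
  have h1 : idx n ≤ hfin.toFinset.sup idx := Finset.le_sup hnF
  have h2 : n ∉ N (idx n) := by
    simpa only [idx, dif_pos hn1] using (key n hn1).choose_spec
  exact h2 (N_antitone N hmono h1 hn)

private lemma rDisjS_vac {α : Type*} (d : α → α → ℝ) (r : ℝ) {P : Set (Set α)}
    (h : ∀ A ∈ P, ∀ B ∈ P, A = B) : rDisjS d r P :=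
  fun A hA B hB hne => absurd (h A hA B hB) hne

private lemma proj_mul_right {N : Subgroup G} {ν : G} (hν : ν ∈ N) (U : Set G) :
    (QuotientGroup.mk '' ((fun g => g * ν) '' U) : Set (G ⧸ N)) = QuotientGroup.mk '' U := by
  have hmk : ∀ u : G, (QuotientGroup.mk (u * ν) : G ⧸ N) = QuotientGroup.mk u := by
    intro u
    refine (QuotientGroup.eq).mpr ?_
    have : (u * ν)⁻¹ * u = ν⁻¹ := by group
    rw [this]
    exact N.inv_mem hν
  rw [Set.image_image]
  simp only [hmk]

end Aux
section Forward

variable {G : Type*} [Group G]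

/-- Bound the cardinality of a set in the quotient of `qdist`-diameter at most `C`. -/
private lemma slice_card_le (l : G → ℝ) (hl : IsLengthFunction l)
    (Nk : Subgroup G) (hNk : Nk.Normal) {S : Set (G ⧸ Nk)} {C : ℝ}
    (hS : ∀ z ∈ S, ∀ w ∈ S, qdist l Nk z w ≤ C) :
    S.ncard ≤ {g : G | l g ≤ C + 1}.ncard := by
  rcases S.eq_empty_or_nonempty with rfl | ⟨z₀, hz₀⟩
  · simp
  obtain ⟨g₀, hg₀⟩ := QuotientGroup.mk_surjective z₀
  have key : ∀ z : G ⧸ Nk, ∃ w : G, z ∈ S →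
      (l w ≤ C + 1 ∧ (QuotientGroup.mk (g₀ * w) : G ⧸ Nk) = z) := by
    intro z
    by_cases hz : z ∈ S
    · have h2 : qdist l Nk z₀ z < C + 1 := lt_of_le_of_lt (hS z₀ hz₀ z hz) (lt_add_one C)
      rw [qdist] at h2
      obtain ⟨r, ⟨g, h, hg, hh, rfl⟩, hr⟩ :=
        (csInf_lt_iff (qset_bddBelow l hl Nk z₀ z) (qset_nonempty l Nk z₀ z)).mp h2
      refine ⟨g⁻¹ * h, fun _ => ⟨le_of_lt hr, ?_⟩⟩
      have hν : g₀⁻¹ * g ∈ Nk := by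
        refine (QuotientGroup.eq).mp ?_
        rw [hg₀, hg]
      have h3 : g * g₀⁻¹ ∈ Nk := by
        have := hNk.conj_mem _ hν g
        have he : g * (g₀⁻¹ * g) * g⁻¹ = g * g₀⁻¹ := by group
        rwa [he] at this
      have h4 : h⁻¹ * (g * g₀⁻¹) * h ∈ Nk := by
        have := hNk.conj_mem _ h3 h⁻¹
        simpa using this
      have h5 : (QuotientGroup.mk (g₀ * (g⁻¹ * h)) : G ⧸ Nk) = QuotientGroup.mk h := by
        refine (QuotientGroup.eq).mpr ?_
        have he : (g₀ * (g⁻¹ * h))⁻¹ * h = h⁻¹ * (g * g₀⁻¹) * h := by group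
        rw [he]
        exact h4
      rw [h5, hh]
    · exact ⟨1, fun hzz => absurd hzz hz⟩
  choose F hF using key
  refine Set.ncard_le_ncard_of_injOn F (fun z hz => (hF z hz).1) ?_ (hl.proper (C + 1))
  intro z hz z' hz' he
  rw [← (hF z hz).2, ← (hF z' hz').2, he]

private lemma forward_dir (l : G → ℝ) (hl : IsLengthFunction l) (N : ℕ → Subgroup G)
    (hnorm : ∀ i, (N i).Normal) (hmono : ∀ i, N (i + 1) ≤ N i)
    (hfin : ∀ i, (N i).FiniteIndex) (htriv : ∀ g : G, (∀ i, g ∈ N i) → g = 1)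
    (hbox : SpaceSFDC (boxDist l N)) : EquivSFDC (dl l) N := by
  intro R hRpos hRmono
  obtain ⟨M, ℬ, hB0, hBstep, C₀, hC₀⟩ := hbox R hRpos hRmono
  set C : ℝ := max C₀ 0 with hCdef
  have hCbox : ∀ Y ∈ ℬ M, ∀ x ∈ Y, ∀ y ∈ Y, boxDist l N x y ≤ C := by
    intro Y hY x hx y hy
    exact (hC₀ Y hY x hx y hy).trans (le_max_left _ _)
  have hC0 : (0 : ℝ) ≤ C := le_max_right _ _
  have hball : {g : G | l g ≤ C + 1}.Finite := hl.proper (C + 1)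
  set V : ℕ := {g : G | l g ≤ C + 1}.ncard with hVdef
  have hV1 : 1 ≤ V := by
    rw [hVdef]
    refine (Set.ncard_pos hball).mpr ⟨1, ?_⟩
    simp only [Set.mem_setOf_eq, hl.len_one]
    linarith
  obtain ⟨K, hK⟩ := exists_deep l hl N hmono htriv (R (M + V))
  haveI : (N K).Normal := hnorm K
  haveI : Finite (G ⧸ N K) := @Subgroup.finite_quotient_of_finiteIndex _ _ _ (hfin K)
  -- the pulled-back families
  set pull : Set ((i : ℕ) × (G ⧸ N i)) → Set G := fun A =>
    QuotientGroup.mk ⁻¹' {z : G ⧸ N K | (⟨K, z⟩ : (i : ℕ) × (G ⧸ N i)) ∈ A} with hpull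
  set famA : ℕ → Set (Set G) := fun j => {X | ∃ A ∈ ℬ j, X = pull A} with hfamA
  set famB : ℕ → Set (Set G) := fun j =>
    {X | ∃ S : Set (G ⧸ N K), X = QuotientGroup.mk ⁻¹' S ∧ S.ncard ≤ max (V - (j - M)) 1}
    with hfamB
  set famC : Set (Set G) := {X | X.Subsingleton} with hfamC
  set 𝒴 : ℕ → Set (Set G) := fun j =>
    if j ≤ M then famA j else if j ≤ M + V then famB j else famC with h𝒴def
  have h1 : ∀ j, j ≤ M → 𝒴 j = famA j := by
    intro j hj; simp only [h𝒴def, if_pos hj]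
  have h2 : ∀ j, M < j → j ≤ M + V → 𝒴 j = famB j := by
    intro j hj hj'
    simp only [h𝒴def, if_neg (by omega : ¬ j ≤ M), if_pos hj']
  have h3 : ∀ j, M + V < j → 𝒴 j = famC := by
    intro j hj
    simp only [h𝒴def, if_neg (by omega : ¬ j ≤ M), if_neg (by omega : ¬ j ≤ M + V)]
  -- the final invariant step
  have hInvStep : DecompSInv (dl l) (N K) (R (M + V)) (𝒴 (M + V)) (𝒴 (M + V + 1)) := by
    rw [h2 (M + V) (by omega) le_rfl]
    rintro X ⟨S, rfl, hcard⟩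
    have hcard1 : S.ncard ≤ 1 := by
      have : V - (M + V - M) = 0 := by omega
      rw [this] at hcard
      simpa using hcard
    rcases (Set.ncard_le_one_iff_eq S.toFinite).mp hcard1 with rfl | ⟨z, rfl⟩
    · refine ⟨∅, ∅, ?_, rDisjS_vac _ _ (by simp), rDisjS_vac _ _ (by simp), ?_, ?_, ?_⟩
      · simp
      · intro A hA; simp at hA
      · intro U hU; simp at hU
      · intro U hU; simp at hU
    · refine ⟨{U | ∃ g : G, (QuotientGroup.mk g : G ⧸ N K) = z ∧ U = {g}}, ∅, ?_, ?_,
        rDisjS_vac _ _ (by simp), ?_, ?_, ?_⟩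
      · ext g
        simp only [Set.mem_preimage, Set.mem_singleton_iff, Set.sUnion_empty,
          Set.union_empty, Set.mem_sUnion, Set.mem_setOf_eq]
        constructor
        · intro hg
          exact ⟨{g}, ⟨g, hg, rfl⟩, rfl⟩
        · rintro ⟨U, ⟨g', hg', rfl⟩, hgU⟩
          rw [Set.mem_singleton_iff] at hgU
          rw [hgU, hg']
      · rintro U ⟨g, hg, rfl⟩ U' ⟨g', hg', rfl⟩ hne x hx y hy
        rw [Set.mem_singleton_iff] at hx hy
        rw [hx, hy]
        have hgg' : g ≠ g' := fun h => hne (by rw [h])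
        have hmem : g⁻¹ * g' ∈ N K := by
          refine (QuotientGroup.eq).mp ?_
          rw [hg, hg']
        have hne1 : g⁻¹ * g' ≠ 1 := by
          intro h
          exact hgg' (by rwa [inv_mul_eq_one] at h)
        exact le_of_lt (hK _ hmem hne1)
      · rintro U (⟨g, hg, rfl⟩ | hU)
        · rw [h3 (M + V + 1) (by omega)]
          exact Set.subsingleton_singleton
        · simp at hU
      · rintro U ⟨g, hg, rfl⟩ h hh
        rw [Set.image_singleton]
        refine ⟨g * h, ?_, rfl⟩
        have : (QuotientGroup.mk (g * h) : G ⧸ N K) = QuotientGroup.mk g := by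
          refine (QuotientGroup.eq).mpr ?_
          have he : (g * h)⁻¹ * g = h⁻¹ := by group
          rw [he]
          exact (N K).inv_mem hh
        rw [this, hg]
      · intro U hU; simp at hU
  refine ⟨M + V + 1, K, Nat.succ_pos _, 𝒴, ?_, ?_, ?_, ?_⟩
  · -- 𝒴 0 = {univ}
    rw [h1 0 (Nat.zero_le M), hfamA]
    have hpu : pull Set.univ = Set.univ := by
      rw [hpull]
      ext g; simp
    ext X
    simp only [Set.mem_setOf_eq, hB0, Set.mem_singleton_iff, exists_eq_left, hpu]
  · -- the chain of decompositions
    intro i hi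
    by_cases hz1 : i + 1 ≤ M
    · -- zone 1 : pull back the box decompositions
      rw [h1 i (by omega), h1 (i + 1) hz1]
      rintro X ⟨A, hA, rfl⟩
      obtain ⟨P₀, P₁, hcov, hd0, hd1, hmem⟩ := hBstep i (by omega) A hA
      have hdisj : ∀ P : Set (Set ((i : ℕ) × (G ⧸ N i))), rDisjS (boxDist l N) (R i) P →
          rDisjS (dl l) (R i) {Y | ∃ B ∈ P, Y = pull B} := by
        intro P hP
        rintro Y1 ⟨B1, hB1, rfl⟩ Y2 ⟨B2, hB2, rfl⟩ hne x hx y hy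
        have hBne : B1 ≠ B2 := fun h => hne (by rw [h])
        have hx' : (⟨K, QuotientGroup.mk x⟩ : (i : ℕ) × (G ⧸ N i)) ∈ B1 := hx
        have hy' : (⟨K, QuotientGroup.mk y⟩ : (i : ℕ) × (G ⧸ N i)) ∈ B2 := hy
        have := hP B1 hB1 B2 hB2 hBne _ hx' _ hy'
        rw [boxDist_mk] at this
        exact this.trans (qdist_le_dl l hl (N K) x y)
      refine ⟨{Y | ∃ B ∈ P₀, Y = pull B}, {Y | ∃ B ∈ P₁, Y = pull B}, ?_,
        hdisj P₀ hd0, hdisj P₁ hd1, ?_⟩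
      · ext g
        constructor
        · intro hg
          have hg' : (⟨K, QuotientGroup.mk g⟩ : (i : ℕ) × (G ⧸ N i)) ∈ ⋃₀ P₀ ∪ ⋃₀ P₁ := by
            rw [← hcov]; exact hg
          rcases hg' with ⟨B, hB, hgB⟩ | ⟨B, hB, hgB⟩
          · exact Or.inl ⟨pull B, ⟨B, hB, rfl⟩, hgB⟩
          · exact Or.inr ⟨pull B, ⟨B, hB, rfl⟩, hgB⟩
        · rintro (⟨Y, ⟨B, hB, rfl⟩, hgY⟩ | ⟨Y, ⟨B, hB, rfl⟩, hgY⟩)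
          · show (⟨K, QuotientGroup.mk g⟩ : (i : ℕ) × (G ⧸ N i)) ∈ A
            rw [hcov]
            exact Or.inl ⟨B, hB, hgY⟩
          · show (⟨K, QuotientGroup.mk g⟩ : (i : ℕ) × (G ⧸ N i)) ∈ A
            rw [hcov]
            exact Or.inr ⟨B, hB, hgY⟩
      · rintro Y (⟨B, hB, rfl⟩ | ⟨B, hB, rfl⟩)
        · exact ⟨B, hmem B (Or.inl hB), rfl⟩
        · exact ⟨B, hmem B (Or.inr hB), rfl⟩
    · by_cases hz2 : i + 1 ≤ M + V
      · -- zone 2 : peeling, vacuously disjoint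
        have hsrc : ∀ X ∈ 𝒴 i, ∃ S : Set (G ⧸ N K),
            X = QuotientGroup.mk ⁻¹' S ∧ S.ncard ≤ max (V - (i - M)) 1 := by
          by_cases hiM : i ≤ M
          · have hieq : i = M := by omega
            subst hieq
            rw [h1 i le_rfl]
            rintro X ⟨A, hA, rfl⟩
            refine ⟨{z : G ⧸ N K | (⟨K, z⟩ : (i : ℕ) × (G ⧸ N i)) ∈ A}, rfl, ?_⟩
            have hcard : {z : G ⧸ N K | (⟨K, z⟩ : (i : ℕ) × (G ⧸ N i)) ∈ A}.ncard ≤ V := by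
              rw [hVdef]
              refine slice_card_le l hl (N K) (hnorm K) ?_
              intro z hz w hw
              have := hCbox A hA ⟨K, z⟩ hz ⟨K, w⟩ hw
              rwa [boxDist_mk] at this
            omega
          · rw [h2 i (by omega) (by omega)]
            rintro X ⟨S, rfl, hS⟩
            exact ⟨S, rfl, hS⟩
        intro X hX
        obtain ⟨S, rfl, hcard⟩ := hsrc X hX
        rw [h2 (i + 1) (by omega) hz2]
        by_cases hS1 : S.ncard ≤ 1
        · refine ⟨{QuotientGroup.mk ⁻¹' S}, ∅, ?_, rDisjS_vac _ _ (by simp),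
            rDisjS_vac _ _ (by simp), ?_⟩
          · simp
          · rintro Y (rfl | hY)
            · exact ⟨S, rfl, by omega⟩
            · simp at hY
        · push_neg at hS1
          obtain ⟨z₀, hz₀⟩ : S.Nonempty := by
            rw [← Set.ncard_pos S.toFinite]; omega
          have hScard : S.ncard ≤ V - (i - M) := by
            rcases le_max_iff.mp hcard with h | h
            · exact h
            · omega
          have hdiff : (S \ {z₀}).ncard = S.ncard - 1 :=
            Set.ncard_diff_singleton_of_mem hz₀
          refine ⟨{QuotientGroup.mk ⁻¹' ({z₀} : Set (G ⧸ N K))},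
            {QuotientGroup.mk ⁻¹' (S \ {z₀})}, ?_, rDisjS_vac _ _ (by simp),
            rDisjS_vac _ _ (by simp), ?_⟩
          · rw [Set.sUnion_singleton, Set.sUnion_singleton, ← Set.preimage_union]
            congr 1
            rw [Set.union_diff_cancel (Set.singleton_subset_iff.mpr hz₀)]
          · rintro Y (rfl | hY)
            · exact ⟨{z₀}, rfl, by rw [Set.ncard_singleton]; omega⟩
            · rw [Set.mem_singleton_iff] at hY
              subst hY
              exact ⟨S \ {z₀}, rfl, by omega⟩
      · -- zone 3 : the final invariant step
        have hieq : i = M + V := by omega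
        subst hieq
        intro X hX
        obtain ⟨P₀, P₁, hcov, hd0, hd1, hmem, -, -⟩ := hInvStep X hX
        exact ⟨P₀, P₁, hcov, hd0, hd1, hmem⟩
  · -- boundedness of the final family
    refine ⟨0, ?_⟩
    rw [h3 (M + V + 1) (by omega)]
    intro Y hY x hx y hy
    have hxy : x = y := hY hx hy
    subst hxy
    simp [dl, hl.len_one]
  · -- the invariant step, at the right index
    have hidx : M + V + 1 - 1 = M + V := by omega
    rw [hidx]
    exact hInvStep

end Forward
section Backward

variable {G : Type*} [Group G]

private lemma backward_dir (l : G → ℝ) (hl : IsLengthFunction l) (N : ℕ → Subgroup G)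
    (hnorm : ∀ i, (N i).Normal) (hmono : ∀ i, N (i + 1) ≤ N i)
    (hfin : ∀ i, (N i).FiniteIndex)
    (hE : EquivSFDC (dl l) N) : SpaceSFDC (boxDist l N) := by
  intro R hRpos hRmono
  obtain ⟨m, K, hm, 𝒴, h𝒴0, hstep, ⟨C, hC⟩, hinv⟩ :=
    hE (fun n => R (n + 1)) (fun n => hRpos _)
      (fun a b h => hRmono (Nat.add_lt_add_right h 1))
  have hFin : ∀ i, Finite (G ⧸ N i) := fun i =>
    @Subgroup.finite_quotient_of_finiteIndex _ _ _ (hfin i)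
  have hNE : ∀ i, Nonempty (G ⧸ N i) := fun i => ⟨QuotientGroup.mk 1⟩
  set T : ℕ := max K (Nat.ceil (R 0)) with hTdef
  have hTR : R 0 ≤ (T : ℝ) := by
    refine le_trans (Nat.le_ceil (R 0)) ?_
    exact_mod_cast le_max_right K _
  have hTK : K ≤ T := le_max_left _ _
  have hNT : ∀ i, T ≤ i → N i ≤ N K := fun i hi =>
    N_antitone N hmono (le_trans hTK hi)
  -- basic objects
  set emb : (i : ℕ) → Set (G ⧸ N i) → Set ((i : ℕ) × (G ⧸ N i)) :=
    fun i S => Sigma.mk i '' S with hembdef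
  set blob : Set ((i : ℕ) × (G ⧸ N i)) := {p | p.1 < T} with hblobdef
  set proj : (i : ℕ) → Set G → Set (G ⧸ N i) :=
    fun i X => QuotientGroup.mk '' X with hprojdef
  set ℬ : ℕ → Set (Set ((i : ℕ) × (G ⧸ N i))) := fun s =>
    if s = 0 then {Set.univ}
    else {Y | Y = blob ∨ ∃ i, T ≤ i ∧ ∃ X ∈ 𝒴 (s - 1), Y = emb i (proj i X)} with hBdef
  have hmemB : ∀ s, s ≠ 0 → ∀ Y, Y ∈ ℬ s ↔
      (Y = blob ∨ ∃ i, T ≤ i ∧ ∃ X ∈ 𝒴 (s - 1), Y = emb i (proj i X)) := by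
    intro s hs Y
    simp only [hBdef, if_neg hs, Set.mem_setOf_eq]
  -- saturation of all the families by right translation by `N K`
  have hsat : ∀ t j, j + t + 1 = m → ∀ X ∈ 𝒴 j, ∀ x ∈ X, ∀ ν ∈ N K, x * ν ∈ X := by
    intro t
    induction t with
    | zero =>
      intro j hj X hX x hx ν hν
      have hj' : j = m - 1 := by omega
      subst hj'
      obtain ⟨P₀, P₁, hcov, -, -, -, hI0, hI1⟩ := hinv X hX
      rw [hcov] at hx ⊢
      rcases hx with ⟨U, hU, hxU⟩ | ⟨U, hU, hxU⟩
      · exact Or.inl ⟨_, hI0 U hU ν hν, ⟨x, hxU, rfl⟩⟩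
      · exact Or.inr ⟨_, hI1 U hU ν hν, ⟨x, hxU, rfl⟩⟩
    | succ t ih =>
      intro j hj X hX x hx ν hν
      obtain ⟨P₀, P₁, hcov, -, -, hmem⟩ := hstep j (by omega) X hX
      rw [hcov] at hx ⊢
      rcases hx with ⟨U, hU, hxU⟩ | ⟨U, hU, hxU⟩
      · exact Or.inl ⟨U, hU, ih (j + 1) (by omega) U (hmem U (Or.inl hU)) x hxU ν hν⟩
      · exact Or.inr ⟨U, hU, ih (j + 1) (by omega) U (hmem U (Or.inr hU)) x hxU ν hν⟩
  have hsat' : ∀ j, j + 1 ≤ m → ∀ X ∈ 𝒴 j, ∀ x ∈ X, ∀ ν ∈ N K, x * ν ∈ X :=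
    fun j hj => hsat (m - 1 - j) j (by omega)
  refine ⟨m + 1, ℬ, ?_, ?_, ?_⟩
  · simp [hBdef]
  · -- the decompositions
    intro s hs
    by_cases hs0 : s = 0
    · subst hs0
      intro Xb hXb
      have hXu : Xb = Set.univ := by
        have : Xb ∈ ({Set.univ} : Set (Set ((i : ℕ) × (G ⧸ N i)))) := by
          rw [hBdef] at hXb
          simpa using hXb
        simpa using this
      subst hXu
      refine ⟨{blob}, {Y | ∃ i, T ≤ i ∧ Y = emb i (proj i Set.univ)}, ?_, ?_, ?_, ?_⟩
      · ext p
        simp only [Set.mem_univ, true_iff, Set.sUnion_singleton, Set.mem_union,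
          Set.mem_sUnion, Set.mem_setOf_eq]
        rcases p with ⟨i, z⟩
        by_cases hiT : i < T
        · exact Or.inl hiT
        · refine Or.inr ⟨emb i (proj i Set.univ), ⟨i, by omega, rfl⟩, ?_⟩
          obtain ⟨g, hg⟩ := QuotientGroup.mk_surjective z
          exact ⟨z, ⟨g, trivial, hg⟩, rfl⟩
      · exact rDisjS_vac _ _ (by simp)
      · -- distinct far pieces
        rintro Y1 ⟨i, hiT, rfl⟩ Y2 ⟨j, hjT, rfl⟩ hne x hx y hy
        have hij : i ≠ j := fun h => hne (by rw [h])
        rcases hx with ⟨zx, -, rfl⟩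
        rcases hy with ⟨zy, -, rfl⟩
        rw [boxDist_of_ne hij]
        haveI := hFin i; haveI := hFin j
        have hdi : (0 : ℝ) ≤ diamD (qdist l (N i)) :=
          diamD_nonneg _ (Classical.choice (hNE i)) (qdist_self l hl (N i) _)
        have hdj : (0 : ℝ) ≤ diamD (qdist l (N j)) :=
          diamD_nonneg _ (Classical.choice (hNE j)) (qdist_self l hl (N j) _)
        have hiR : (T : ℝ) ≤ (i : ℝ) := by exact_mod_cast hiT
        have hjR : (0 : ℝ) ≤ (j : ℝ) := Nat.cast_nonneg j
        linarith
      · rintro Y (rfl | ⟨i, hiT, rfl⟩)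
        · rw [hmemB 1 one_ne_zero]
          exact Or.inl rfl
        · rw [hmemB 1 one_ne_zero]
          refine Or.inr ⟨i, hiT, Set.univ, ?_, rfl⟩
          rw [h𝒴0]
          rfl
    · -- steps 1,…,m
      have hs1 : 1 ≤ s := by omega
      have hsm : s ≤ m := by omega
      have hsub1 : s - 1 + 1 = s := by omega
      intro Xb hXb
      rw [hmemB s hs0] at hXb
      rcases hXb with rfl | ⟨i, hiT, X, hX, rfl⟩
      · -- the blob persists
        refine ⟨{blob}, ∅, by simp, rDisjS_vac _ _ (by simp), rDisjS_vac _ _ (by simp), ?_⟩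
        rintro Y (rfl | hY)
        · rw [hmemB (s + 1) (Nat.succ_ne_zero s)]
          exact Or.inl rfl
        · simp at hY
      · have hNi : N i ≤ N K := hNT i hiT
        -- a helper to recognize quotient points of members
        by_cases hseqm : s = m
        · -- the invariant step, pushed down by invariance
          obtain ⟨Q₀, Q₁, hcov, hd0, hd1, hmem, hI0, hI1⟩ :=
            hinv X (by rw [hseqm] at hX; exact hX)
          have hUX : ∀ U, U ∈ Q₀ ∪ Q₁ → U ⊆ X := by
            intro U hU u hu
            rw [hcov]
            rcases hU with hU | hU
            · exact Or.inl ⟨U, hU, hu⟩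
            · exact Or.inr ⟨U, hU, hu⟩
          have hdisj : ∀ Q : Set (Set G), Q ⊆ Q₀ ∪ Q₁ →
              (∀ U ∈ Q, ∀ ν ∈ N K, (fun g => g * ν) '' U ∈ Q) →
              rDisjS (dl l) (R (s - 1 + 1)) Q →
              rDisjS (boxDist l N) (R s) {Y | ∃ U ∈ Q, Y = emb i (proj i U)} := by
            intro Q hQsub hQinv hQd
            rintro Y1 ⟨U, hU, rfl⟩ Y2 ⟨U', hU', rfl⟩ hne x hx y hy
            rcases hx with ⟨zx, ⟨u, hu, rfl⟩, rfl⟩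
            rcases hy with ⟨zy, ⟨v, hv, rfl⟩, rfl⟩
            rw [boxDist_mk]
            refine le_qdist l ?_
            intro g h' hg hh'
            have hν₁ : u⁻¹ * g ∈ N i := by
              have := (QuotientGroup.eq).mp hg
              simpa using (N i).inv_mem this
            have hν₂ : v⁻¹ * h' ∈ N i := by
              have := (QuotientGroup.eq).mp hh'
              simpa using (N i).inv_mem this
            have hgU : g ∈ (fun w => w * (u⁻¹ * g)) '' U := ⟨u, hu, mul_inv_cancel_left u g⟩
            have hhU : h' ∈ (fun w => w * (v⁻¹ * h')) '' U' := ⟨v, hv, mul_inv_cancel_left v h'⟩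
            have hU₁ : (fun w => w * (u⁻¹ * g)) '' U ∈ Q := hQinv U hU _ (hNi hν₁)
            have hU₂ : (fun w => w * (v⁻¹ * h')) '' U' ∈ Q := hQinv U' hU' _ (hNi hν₂)
            have hne12 : (fun w => w * (u⁻¹ * g)) '' U ≠ (fun w => w * (v⁻¹ * h')) '' U' := by
              intro heq
              apply hne
              have e1 : proj i ((fun w => w * (u⁻¹ * g)) '' U) = proj i U := by
                simp only [hprojdef]
                exact proj_mul_right hν₁ U
              have e2 : proj i ((fun w => w * (v⁻¹ * h')) '' U') = proj i U' := by
                simp only [hprojdef]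
                exact proj_mul_right hν₂ U'
              rw [← e1, heq, e2]
            have := hQd _ hU₁ _ hU₂ hne12 g hgU h' hhU
            rwa [hsub1] at this
          refine ⟨{Y | ∃ U ∈ Q₀, Y = emb i (proj i U)}, {Y | ∃ U ∈ Q₁, Y = emb i (proj i U)},
            ?_, ?_, ?_, ?_⟩
          · ext p
            constructor
            · rintro ⟨z, ⟨a, haX, rfl⟩, rfl⟩
              rw [hcov] at haX
              rcases haX with ⟨U, hU, haU⟩ | ⟨U, hU, haU⟩
              · exact Or.inl ⟨emb i (proj i U), ⟨U, hU, rfl⟩, ⟨_, ⟨a, haU, rfl⟩, rfl⟩⟩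
              · exact Or.inr ⟨emb i (proj i U), ⟨U, hU, rfl⟩, ⟨_, ⟨a, haU, rfl⟩, rfl⟩⟩
            · rintro (⟨Y, ⟨U, hU, rfl⟩, hpY⟩ | ⟨Y, ⟨U, hU, rfl⟩, hpY⟩)
              · rcases hpY with ⟨z, ⟨a, ha, rfl⟩, rfl⟩
                exact ⟨_, ⟨a, hUX U (Or.inl hU) ha, rfl⟩, rfl⟩
              · rcases hpY with ⟨z, ⟨a, ha, rfl⟩, rfl⟩
                exact ⟨_, ⟨a, hUX U (Or.inr hU) ha, rfl⟩, rfl⟩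
          · refine hdisj Q₀ Set.subset_union_left hI0 ?_
            rw [hseqm]
            exact hd0
          · refine hdisj Q₁ Set.subset_union_right hI1 ?_
            rw [hseqm]
            exact hd1
          · rintro Y (⟨U, hU, rfl⟩ | ⟨U, hU, rfl⟩)
            · rw [hmemB (s + 1) (Nat.succ_ne_zero s)]
              exact Or.inr ⟨i, hiT, U, by simpa [hseqm] using hmem U (Or.inl hU), rfl⟩
            · rw [hmemB (s + 1) (Nat.succ_ne_zero s)]
              exact Or.inr ⟨i, hiT, U, by simpa [hseqm] using hmem U (Or.inr hU), rfl⟩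
        · -- a plain step, pushed down by saturation
          have hslt : s < m := by omega
          obtain ⟨P₀, P₁, hcov, hd0, hd1, hmem⟩ := hstep (s - 1) (by omega) X hX
          have hmem' : ∀ A, A ∈ P₀ ∪ P₁ → A ∈ 𝒴 s := by
            intro A hA
            have := hmem A hA
            rwa [hsub1] at this
          have hAX : ∀ A, A ∈ P₀ ∪ P₁ → A ⊆ X := by
            intro A hA a ha
            rw [hcov]
            rcases hA with hA | hA
            · exact Or.inl ⟨A, hA, ha⟩
            · exact Or.inr ⟨A, hA, ha⟩
          have hdisj : ∀ P : Set (Set G), P ⊆ P₀ ∪ P₁ → rDisjS (dl l) (R (s - 1 + 1)) P →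
              rDisjS (boxDist l N) (R s) {Y | ∃ A ∈ P, Y = emb i (proj i A)} := by
            intro P hPsub hPd
            rintro Y1 ⟨A, hA, rfl⟩ Y2 ⟨B, hB, rfl⟩ hne x hx y hy
            have hAB : A ≠ B := fun h => hne (by rw [h])
            rcases hx with ⟨zx, ⟨a, ha, rfl⟩, rfl⟩
            rcases hy with ⟨zy, ⟨b, hb, rfl⟩, rfl⟩
            rw [boxDist_mk]
            refine le_qdist l ?_
            intro g h' hg hh'
            have hν₁ : a⁻¹ * g ∈ N i := by
              have := (QuotientGroup.eq).mp hg
              simpa using (N i).inv_mem this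
            have hν₂ : b⁻¹ * h' ∈ N i := by
              have := (QuotientGroup.eq).mp hh'
              simpa using (N i).inv_mem this
            have hgA : g ∈ A := by
              have := hsat' s hslt A (hmem' A (hPsub hA)) a ha _ (hNi hν₁)
              rwa [mul_inv_cancel_left] at this
            have hhB : h' ∈ B := by
              have := hsat' s hslt B (hmem' B (hPsub hB)) b hb _ (hNi hν₂)
              rwa [mul_inv_cancel_left] at this
            have := hPd A hA B hB hAB g hgA h' hhB
            rwa [hsub1] at this
          refine ⟨{Y | ∃ A ∈ P₀, Y = emb i (proj i A)}, {Y | ∃ A ∈ P₁, Y = emb i (proj i A)},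
            ?_, ?_, ?_, ?_⟩
          · ext p
            constructor
            · rintro ⟨z, ⟨a, haX, rfl⟩, rfl⟩
              rw [hcov] at haX
              rcases haX with ⟨A, hA, haA⟩ | ⟨A, hA, haA⟩
              · exact Or.inl ⟨emb i (proj i A), ⟨A, hA, rfl⟩, ⟨_, ⟨a, haA, rfl⟩, rfl⟩⟩
              · exact Or.inr ⟨emb i (proj i A), ⟨A, hA, rfl⟩, ⟨_, ⟨a, haA, rfl⟩, rfl⟩⟩
            · rintro (⟨Y, ⟨A, hA, rfl⟩, hpY⟩ | ⟨Y, ⟨A, hA, rfl⟩, hpY⟩)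
              · rcases hpY with ⟨z, ⟨a, ha, rfl⟩, rfl⟩
                exact ⟨_, ⟨a, hAX A (Or.inl hA) ha, rfl⟩, rfl⟩
              · rcases hpY with ⟨z, ⟨a, ha, rfl⟩, rfl⟩
                exact ⟨_, ⟨a, hAX A (Or.inr hA) ha, rfl⟩, rfl⟩
          · exact hdisj P₀ Set.subset_union_left hd0
          · exact hdisj P₁ Set.subset_union_right hd1
          · rintro Y (⟨A, hA, rfl⟩ | ⟨A, hA, rfl⟩)
            · rw [hmemB (s + 1) (Nat.succ_ne_zero s)]
              exact Or.inr ⟨i, hiT, A, by simpa using hmem' A (Or.inl hA), rfl⟩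
            · rw [hmemB (s + 1) (Nat.succ_ne_zero s)]
              exact Or.inr ⟨i, hiT, A, by simpa using hmem' A (Or.inr hA), rfl⟩
  · -- boundedness of the final family
    set Dq : ℕ → ℝ := fun i => max (diamD (qdist l (N i))) 0 with hDq
    refine ⟨(∑ i ∈ Finset.range T, Dq i) + 2 * (T : ℝ) + max C 0, ?_⟩
    have hsum0 : (0 : ℝ) ≤ ∑ i ∈ Finset.range T, Dq i :=
      Finset.sum_nonneg fun k _ => le_max_right _ 0
    intro Y hY x hx y hy
    rw [hmemB (m + 1) (Nat.succ_ne_zero m)] at hY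
    rcases hY with rfl | ⟨i, hiT, X, hX, rfl⟩
    · -- the blob is bounded
      rcases x with ⟨i, zx⟩
      rcases y with ⟨j, zy⟩
      have hiT : i < T := hx
      have hjT : j < T := hy
      by_cases hij : i = j
      · subst hij
        rw [boxDist_mk]
        haveI := hFin i
        have h1 : qdist l (N i) zx zy ≤ diamD (qdist l (N i)) := le_diamD _ zx zy
        have h2 : diamD (qdist l (N i)) ≤ Dq i := le_max_left _ _
        have h3 : Dq i ≤ ∑ k ∈ Finset.range T, Dq k :=
          Finset.single_le_sum (f := Dq) (fun k _ => (le_max_right _ 0 : (0:ℝ) ≤ Dq k)) (Finset.mem_range.mpr hiT)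
        have h4 : (0 : ℝ) ≤ (T : ℝ) := Nat.cast_nonneg T
        have h5 : (0 : ℝ) ≤ max C 0 := le_max_right _ _
        linarith
      · rw [boxDist_of_ne hij]
        haveI := hFin i; haveI := hFin j
        have hsub : ({i, j} : Finset ℕ) ⊆ Finset.range T := by
          intro k hk
          rcases Finset.mem_insert.mp hk with rfl | hk
          · exact Finset.mem_range.mpr hiT
          · rw [Finset.mem_singleton] at hk
            subst hk
            exact Finset.mem_range.mpr hjT
        have hpair : Dq i + Dq j ≤ ∑ k ∈ Finset.range T, Dq k := by
          have := Finset.sum_le_sum_of_subset_of_nonneg hsub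
            (fun k _ _ => (le_max_right _ 0 : (0:ℝ) ≤ Dq k))
          rwa [Finset.sum_pair hij] at this
        have h1 : diamD (qdist l (N i)) ≤ Dq i := le_max_left _ _
        have h2 : diamD (qdist l (N j)) ≤ Dq j := le_max_left _ _
        have h3 : (i : ℝ) ≤ (T : ℝ) := by exact_mod_cast hiT.le
        have h4 : (j : ℝ) ≤ (T : ℝ) := by exact_mod_cast hjT.le
        have h5 : (0 : ℝ) ≤ max C 0 := le_max_right _ _
        linarith
    · -- the pushed-down bounded pieces
      rcases hx with ⟨zx, ⟨a, ha, rfl⟩, rfl⟩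
      rcases hy with ⟨zy, ⟨b, hb, rfl⟩, rfl⟩
      rw [boxDist_mk]
      have h1 : qdist l (N i) (QuotientGroup.mk a) (QuotientGroup.mk b) ≤ dl l a b :=
        qdist_le_dl l hl (N i) a b
      have h2 : dl l a b ≤ C := by
        have hX' : X ∈ 𝒴 m := by simpa using hX
        exact hC X hX' a ha b hb
      have h3 : C ≤ max C 0 := le_max_left _ _
      have h4 : (0 : ℝ) ≤ (T : ℝ) := Nat.cast_nonneg T
      linarith

end Backward
/-- Theorem 2: the box space `□_{Nᵢ} G` has straight FDC iff `G`
has equi-variant straight FDC with respect to `{Nᵢ}`. -/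
theorem boxSpace_sfdc_iff_equivariant_sfdc {G : Type*} [Group G] [Countable G]
    (l : G → ℝ) (hl : IsLengthFunction l) (N : ℕ → Subgroup G)
    (hnorm : ∀ i, (N i).Normal) (hmono : ∀ i, N (i + 1) ≤ N i) (h0 : N 0 = ⊤)
    (hfin : ∀ i, (N i).FiniteIndex) (htriv : ∀ g : G, (∀ i, g ∈ N i) → g = 1) :
    SpaceSFDC (boxDist l N) ↔ EquivSFDC (dl l) N :=
  ⟨fun h => forward_dir l hl N hnorm hmono hfin htriv h,
   fun h => backward_dir l hl N hnorm hmono hfin h⟩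

end FDCPaper
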